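/- Let k*, q, k̄ ∈ ℝ^d be nonzero vectors with d ≥ 1. Suppose CosSim(k*, q) = β > 0 and CosSim(k̄, q) = α < 0. Then CosSim(k̄, k*) ≤ 1 + αβ − α²/2 − β²/2. -/

import Mathlib

theorem keydiff_cossim_bound
    (d : ℕ) (hd : 1 ≤ d)
    (kstar q kbar : EuclideanSpace ℝ (Fin d))
    (hkstar : kstar ≠ 0) (hq : q ≠ 0) (hkbar : kbar ≠ 0)
    (α β : ℝ)
    (hβ : (inner ℝ kstar q : ℝ) / (‖kstar‖ * ‖q‖) = β) (hβpos : 0 < β)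
    (hα : (inner ℝ kbar q : ℝ) / (‖kbar‖ * ‖q‖) = α) (hαneg : α < 0) :
    (inner ℝ kbar kstar : ℝ) / (‖kbar‖ * ‖kstar‖) ≤ 1 + α * β - α ^ 2 / 2 - β ^ 2 / 2 := by
  have hnk : (0:ℝ) < ‖kstar‖ := norm_pos_iff.mpr hkstar
  have hnq : (0:ℝ) < ‖q‖ := norm_pos_iff.mpr hq
  have hnb : (0:ℝ) < ‖kbar‖ := norm_pos_iff.mpr hkbar
  set u : EuclideanSpace ℝ (Fin d) := (‖q‖)⁻¹ • q with hu
  set a : EuclideanSpace ℝ (Fin d) := (‖kstar‖)⁻¹ • kstar with ha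
  set b : EuclideanSpace ℝ (Fin d) := (‖kbar‖)⁻¹ • kbar with hb
  have hnu : ‖u‖ = 1 := norm_smul_inv_norm hq
  have hna : ‖a‖ = 1 := norm_smul_inv_norm hkstar
  have hnbb : ‖b‖ = 1 := norm_smul_inv_norm hkbar
  have hua : (inner ℝ a u : ℝ) = β := by
    rw [ha, hu, real_inner_smul_left, real_inner_smul_right, ← hβ]
    field_simp
  have hub : (inner ℝ b u : ℝ) = α := by
    rw [hb, hu, real_inner_smul_left, real_inner_smul_right, ← hα]
    field_simp
  have hgoal : (inner ℝ kbar kstar : ℝ) / (‖kbar‖ * ‖kstar‖) = inner ℝ b a := by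
    rw [hb, ha, real_inner_smul_left, real_inner_smul_right]
    field_simp
  rw [hgoal]
  have hau : (inner ℝ u a : ℝ) = β := by rw [real_inner_comm]; exact hua
  have hbu : (inner ℝ u b : ℝ) = α := by rw [real_inner_comm]; exact hub
  have huu : (inner ℝ u u : ℝ) = 1 := by
    rw [real_inner_self_eq_norm_sq, hnu]; norm_num
  have haa : (inner ℝ a a : ℝ) = 1 := by
    rw [real_inner_self_eq_norm_sq, hna]; norm_num
  have hbbi : (inner ℝ b b : ℝ) = 1 := by
    rw [real_inner_self_eq_norm_sq, hnbb]; norm_num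
  have h1 : ‖a - β • u‖ ^ 2 = 1 - β ^ 2 := by
    rw [← real_inner_self_eq_norm_sq]
    simp only [inner_sub_left, inner_sub_right, real_inner_smul_left,
      real_inner_smul_right, hua, huu, haa]
    rw [hau]; ring
  have h2 : ‖b - α • u‖ ^ 2 = 1 - α ^ 2 := by
    rw [← real_inner_self_eq_norm_sq]
    simp only [inner_sub_left, inner_sub_right, real_inner_smul_left,
      real_inner_smul_right, hub, huu, hbbi]
    rw [hbu]; ring
  have hcs : (inner ℝ (b - α • u) (a - β • u) : ℝ) ≤ ‖b - α • u‖ * ‖a - β • u‖ :=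
    real_inner_le_norm _ _
  have hexp : (inner ℝ (b - α • u) (a - β • u) : ℝ) = (inner ℝ b a : ℝ) - α * β := by
    simp only [inner_sub_left, inner_sub_right, real_inner_smul_left,
      real_inner_smul_right, hub, huu]
    rw [hau]; ring
  have hyoung : ‖b - α • u‖ * ‖a - β • u‖ ≤ (1 - α ^ 2) / 2 + (1 - β ^ 2) / 2 := by
    nlinarith [sq_nonneg (‖b - α • u‖ - ‖a - β • u‖), h1, h2]
  rw [hexp] at hcs
  linarith
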